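/- Let S ⊂ [m]×[n], U ∈ ℝ^{m×n}, r ∈ [m−1], and let X be a critical point of d_U on 𝓛_r^S in the sense of Lagrange multipliers: there exist multipliers λ_{I,J} (over all |I|=|J|=r+1) and μ_k (over the constraints x_{ij}=0, (i,j)∈S) such that u_{ij} − x_{ij} = Σ_{I,J} λ_{I,J} ∂M_{I,J}/∂x_{ij}(X) + Σ_k μ_k ∂L_k/∂x_{ij}(X) for all (i,j), together with M_{I,J}(X) = 0 for all |I|=|J|=r+1 and x_{ij} = 0 for (i,j) ∈ S. If i ∼_R^S j (rows i and j have identical zero patterns in S), then X satisfies the linear relation (XUᵀ − UXᵀ)_{ij} = 0. Similarly, if columns i and j have identical zero patterns in S, then (XᵀU − UᵀX)_{ij} = 0. -/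

import Mathlib

open Matrix
open scoped Classical

/-- The minor with rows `I` and columns `J` of an `m × n` complex matrix; it is `0` by
convention when `|I| ≠ |J|`. -/
noncomputable def minorC {m n : ℕ} (Y : Matrix (Fin m) (Fin n) ℂ)
    (I : Finset (Fin m)) (J : Finset (Fin n)) : ℂ :=
  if h : I.card = J.card then
    (Y.submatrix (⇑(I.orderEmbOfFin rfl)) (⇑(J.orderEmbOfFin h.symm))).det
  else 0

/-- The minor `M_{I,J}` as a function of the `m·n` matrix entries. -/
noncomputable def minorFun {m n : ℕ} (I : Finset (Fin m)) (J : Finset (Fin n)) :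
    (Fin m × Fin n → ℂ) → ℂ :=
  fun Y => minorC (Matrix.of fun a b => Y (a, b)) I J

lemma minorC_eq {m n : ℕ} (Y : Matrix (Fin m) (Fin n) ℂ) {I : Finset (Fin m)}
    {J : Finset (Fin n)} {k : ℕ} (hI : I.card = k) (hJ : J.card = k) :
    minorC Y I J = (Y.submatrix (⇑(I.orderEmbOfFin hI)) (⇑(J.orderEmbOfFin hJ))).det := by
  subst hI
  rw [minorC, dif_pos hJ.symm]

lemma minorC_transpose {m n : ℕ} (Y : Matrix (Fin m) (Fin n) ℂ) (I : Finset (Fin m))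
    (J : Finset (Fin n)) : minorC Yᵀ J I = minorC Y I J := by
  by_cases h : I.card = J.card
  · rw [minorC_eq Yᵀ (k := I.card) h.symm rfl, minorC_eq Y (k := I.card) rfl h.symm,
      ← Matrix.transpose_submatrix, Matrix.det_transpose]
  · rw [minorC, dif_neg (fun hh => h hh.symm), minorC, dif_neg h]

lemma differentiable_finset_prod {ι E : Type*} [NormedAddCommGroup E] [NormedSpace ℂ E]
    (u : Finset ι) (g : ι → E → ℂ) (h : ∀ i ∈ u, Differentiable ℂ (g i)) :
    Differentiable ℂ (fun x => ∏ i ∈ u, g i x) := by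
  classical
  induction u using Finset.induction_on with
  | empty => simpa using differentiable_const (1 : ℂ)
  | insert _ _ hni ih =>
    simp only [Finset.prod_insert hni]
    exact (h _ (Finset.mem_insert_self _ _)).mul
      (ih fun i hi => h i (Finset.mem_insert_of_mem hi))

lemma differentiable_minorFun {m n : ℕ} (I : Finset (Fin m)) (J : Finset (Fin n)) :
    Differentiable ℂ (minorFun I J) := by
  unfold minorFun minorC
  by_cases h : I.card = J.card
  · simp only [dif_pos h]
    have key : (fun Y : Fin m × Fin n → ℂ =>
        ((Matrix.of fun a b => Y (a, b)).submatrix (⇑(I.orderEmbOfFin rfl))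
          (⇑(J.orderEmbOfFin h.symm))).det)
        = fun Y => ∑ σ : Equiv.Perm (Fin I.card), (Equiv.Perm.sign σ : ℂ) *
            ∏ a, Y (I.orderEmbOfFin rfl (σ a), J.orderEmbOfFin h.symm a) := by
      funext Y
      rw [Matrix.det_apply']
      rfl
    rw [key]
    apply Differentiable.fun_sum
    intro σ _
    apply Differentiable.const_mul
    apply differentiable_finset_prod
    intro a _
    exact (differentiable_pi.mp differentiable_id) _
  · simp only [dif_neg h]
    exact differentiable_const 0

lemma fderiv_apply_eq_zero {κ : Type*} [Fintype κ] {f : (κ → ℂ) → ℂ}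
    (hf : Differentiable ℂ f) (x V : κ → ℂ) (h : ∀ t : ℂ, f (x + t • V) = 0) :
    fderiv ℂ f x V = 0 := by
  have hg : HasDerivAt (fun t : ℂ => x + t • V) V 0 := by
    simpa using ((hasDerivAt_id (0 : ℂ)).smul_const V).const_add x
  have hx : x + (0 : ℂ) • V = x := by simp
  have h1 : HasDerivAt (fun t : ℂ => f (x + t • V)) ((fderiv ℂ f x) V) 0 := by
    have := HasFDerivAt.comp_hasDerivAt (l := f) (0 : ℂ) (hf (x + (0 : ℂ) • V)).hasFDerivAt hg
    rw [hx] at this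
    exact this
  have h2 : (fun t : ℂ => f (x + t • V)) = fun _ => (0 : ℂ) := funext h
  rw [h2] at h1
  simpa using h1.unique (hasDerivAt_const 0 0)

lemma minor_updateRow_zero {m n r : ℕ} (X : Matrix (Fin m) (Fin n) ℂ)
    (hminors : ∀ (I : Finset (Fin m)) (J : Finset (Fin n)),
      I.card = r + 1 → J.card = r + 1 → minorC X I J = 0)
    {I : Finset (Fin m)} {J : Finset (Fin n)} (hI : I.card = r + 1) (hJ : J.card = r + 1)
    (i j : Fin m) (t : ℂ) :
    minorC (X.updateRow j (fun b => X j b + t * X i b)) I J = 0 := by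
  set e1 : Fin (r + 1) ↪o Fin m := I.orderEmbOfFin hI with he1
  set e2 : Fin (r + 1) ↪o Fin n := J.orderEmbOfFin hJ with he2
  rw [minorC_eq _ hI hJ]
  by_cases hjI : j ∈ I
  · -- find the slot of j
    have hjr : j ∈ Set.range ⇑e1 := by
      rw [he1, Finset.range_orderEmbOfFin]; exact hjI
    obtain ⟨a0, ha0⟩ := hjr
    set M : Matrix (Fin (r + 1)) (Fin (r + 1)) ℂ := X.submatrix ⇑e1 ⇑e2 with hM
    have hMdet : M.det = 0 := by rw [hM, ← minorC_eq X hI hJ]; exact hminors I J hI hJ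
    have hsub : (X.updateRow j fun b => X j b + t * X i b).submatrix ⇑e1 ⇑e2
        = M.updateRow a0 ((fun b => X j (e2 b)) + t • fun b => X i (e2 b)) := by
      ext a b
      by_cases ha : a = a0
      · subst ha
        simp [Matrix.updateRow_apply, ha0, hM]
      · have hne : e1 a ≠ j := by
          rw [← ha0]; exact fun hc => ha (e1.injective hc)
        simp [Matrix.updateRow_apply, hne, ha, hM]
    rw [hsub, Matrix.det_updateRow_add, Matrix.det_updateRow_smul]
    have hrow : (fun b => X j (e2 b)) = M a0 := by
      funext b; rw [hM]; simp [← ha0]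
    rw [hrow, Matrix.updateRow_eq_self, hMdet, zero_add]
    -- now show det (M.updateRow a0 (fun b => X i (e2 b))) = 0
    have hv : (M.updateRow a0 fun b => X i (e2 b)).det = 0 := by
      by_cases hij : i = j
      · subst hij
        have : (fun b => X i (e2 b)) = M a0 := hrow
        rw [this, Matrix.updateRow_eq_self]; exact hMdet
      by_cases hiI : i ∈ I
      · have hir : i ∈ Set.range ⇑e1 := by
          rw [he1, Finset.range_orderEmbOfFin]; exact hiI
        obtain ⟨a1, ha1⟩ := hir
        have hane : a0 ≠ a1 := by
          intro hc; exact hij (by rw [← ha1, ← hc, ha0])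
        apply Matrix.det_zero_of_row_eq hane
        have h1 : (M.updateRow a0 fun b => X i (e2 b)) a0 = fun b => X i (e2 b) := by
          simp
        have h2 : (M.updateRow a0 fun b => X i (e2 b)) a1 = fun b => X i (e2 b) := by
          rw [Matrix.updateRow_ne (Ne.symm hane)]
          funext b; rw [hM]; simp [ha1]
        rw [h1, h2]
      · -- i ∉ I : row replaced minor is (up to sign) a minor of X
        set I' : Finset (Fin m) := insert i (I.erase j) with hI'def
        have hiIe : i ∉ I.erase j := fun hc => hiI (Finset.mem_of_mem_erase hc)
        have hI' : I'.card = r + 1 := by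
          rw [hI'def, Finset.card_insert_of_notMem hiIe, Finset.card_erase_of_mem hjI, hI]; omega
        set f : Fin (r + 1) → Fin m := Function.update (⇑e1) a0 i with hf
        have hf_into : ∀ a, f a ∈ I' := by
          intro a
          by_cases ha : a = a0
          · subst ha; rw [hf]; simp [Function.update_self, hI'def]
          · rw [hf]
            simp only [Function.update_of_ne ha]
            have hne : e1 a ≠ j := by
              rw [← ha0]; exact fun hc => ha (e1.injective hc)
            have : e1 a ∈ I := by rw [he1]; exact Finset.orderEmbOfFin_mem I hI a
            exact Finset.mem_insert_of_mem (Finset.mem_erase.mpr ⟨hne, this⟩)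
        have hf_inj : Function.Injective f := by
          intro a b hab
          by_cases ha : a = a0 <;> by_cases hb : b = a0
          · rw [ha, hb]
          · exfalso
            rw [hf] at hab
            rw [ha] at hab
            simp only [Function.update_self, Function.update_of_ne hb] at hab
            exact hiI (by rw [hab, he1]; exact Finset.orderEmbOfFin_mem I hI b)
          · exfalso
            rw [hf] at hab
            rw [hb] at hab
            simp only [Function.update_self, Function.update_of_ne ha] at hab
            exact hiI (by rw [← hab, he1]; exact Finset.orderEmbOfFin_mem I hI a)
          · rw [hf] at hab
            simp only [Function.update_of_ne ha, Function.update_of_ne hb] at hab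
            exact e1.injective hab
        set g : Fin (r + 1) → Fin (r + 1) :=
          fun a => (I'.orderIsoOfFin hI').symm ⟨f a, hf_into a⟩ with hg
        have hg_spec : ∀ a, I'.orderEmbOfFin hI' (g a) = f a := by
          intro a
          rw [hg, ← Finset.coe_orderIsoOfFin_apply]
          simp
        have hg_inj : Function.Injective g := by
          intro a b hab
          apply hf_inj
          rw [← hg_spec a, ← hg_spec b, hab]
        have hg_bij : Function.Bijective g := (Finite.injective_iff_bijective).mp hg_inj
        set σ : Equiv.Perm (Fin (r + 1)) := Equiv.ofBijective g hg_bij with hσ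
        have hMu : (M.updateRow a0 fun b => X i (e2 b))
            = (X.submatrix (⇑(I'.orderEmbOfFin hI')) ⇑e2).submatrix σ id := by
          ext a b
          simp only [Matrix.submatrix_apply, id_eq]
          have : σ a = g a := rfl
          rw [this, hg_spec a]
          by_cases ha : a = a0
          · subst ha; simp [hf]
          · rw [hf]
            simp [Function.update_of_ne ha, Matrix.updateRow_ne ha, hM]
        rw [hMu, Matrix.det_permute, ← minorC_eq X hI' hJ, hminors I' J hI' hJ, mul_zero]
    rw [hv, mul_zero]
  · -- j ∉ I : matrix unchanged
    have : (X.updateRow j fun b => X j b + t * X i b).submatrix ⇑e1 ⇑e2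
        = X.submatrix ⇑e1 ⇑e2 := by
      ext a b
      have hne : e1 a ≠ j := by
        intro hc
        exact hjI (by rw [← hc, he1]; exact Finset.orderEmbOfFin_mem I hI a)
      simp [Matrix.updateRow_apply, hne]
    rw [this, ← minorC_eq X hI hJ]
    exact hminors I J hI hJ

lemma minor_updateColumn_zero {m n r : ℕ} (X : Matrix (Fin m) (Fin n) ℂ)
    (hminors : ∀ (I : Finset (Fin m)) (J : Finset (Fin n)),
      I.card = r + 1 → J.card = r + 1 → minorC X I J = 0)
    {I : Finset (Fin m)} {J : Finset (Fin n)} (hI : I.card = r + 1) (hJ : J.card = r + 1)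
    (i j : Fin n) (t : ℂ) :
    minorC (X.updateCol j (fun a => X a j + t * X a i)) I J = 0 := by
  rw [← minorC_transpose, ← Matrix.updateRow_transpose]
  have hminors' : ∀ (J' : Finset (Fin n)) (I' : Finset (Fin m)),
      J'.card = r + 1 → I'.card = r + 1 → minorC Xᵀ J' I' = 0 := by
    intro J' I' hJ' hI'
    rw [minorC_transpose]
    exact hminors I' J' hI' hJ'
  have := minor_updateRow_zero Xᵀ hminors' hJ hI i j t
  exact this

lemma minorFun_line_row {m n : ℕ} (X : Matrix (Fin m) (Fin n) ℂ) (I : Finset (Fin m))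
    (J : Finset (Fin n)) (i j : Fin m) (t : ℂ) :
    minorFun I J ((fun p : Fin m × Fin n => X p.1 p.2)
        + t • fun p : Fin m × Fin n => if p.1 = j then X i p.2 else 0)
      = minorC (X.updateRow j (fun b => X j b + t * X i b)) I J := by
  unfold minorFun
  congr 1
  ext a b
  by_cases h : a = j <;>
    simp [Matrix.updateRow_apply, h]

lemma minorFun_line_col {m n : ℕ} (X : Matrix (Fin m) (Fin n) ℂ) (I : Finset (Fin m))
    (J : Finset (Fin n)) (i j : Fin n) (t : ℂ) :
    minorFun I J ((fun p : Fin m × Fin n => X p.1 p.2)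
        + t • fun p : Fin m × Fin n => if p.2 = j then X p.1 i else 0)
      = minorC (X.updateCol j (fun a => X a j + t * X a i)) I J := by
  unfold minorFun
  congr 1
  ext a b
  by_cases h : b = j <;>
    simp [Matrix.updateCol_apply, h]

lemma fderiv_minor_row {m n r : ℕ} (X : Matrix (Fin m) (Fin n) ℂ)
    (hminors : ∀ (I : Finset (Fin m)) (J : Finset (Fin n)),
      I.card = r + 1 → J.card = r + 1 → minorC X I J = 0)
    {I : Finset (Fin m)} {J : Finset (Fin n)} (hI : I.card = r + 1) (hJ : J.card = r + 1)
    (i j : Fin m) :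
    fderiv ℂ (minorFun I J) (fun p : Fin m × Fin n => X p.1 p.2)
      (fun p : Fin m × Fin n => if p.1 = j then X i p.2 else 0) = 0 :=
  fderiv_apply_eq_zero (differentiable_minorFun I J) _ _ (fun t => by
    rw [minorFun_line_row]
    exact minor_updateRow_zero X hminors hI hJ i j t)

lemma fderiv_minor_col {m n r : ℕ} (X : Matrix (Fin m) (Fin n) ℂ)
    (hminors : ∀ (I : Finset (Fin m)) (J : Finset (Fin n)),
      I.card = r + 1 → J.card = r + 1 → minorC X I J = 0)
    {I : Finset (Fin m)} {J : Finset (Fin n)} (hI : I.card = r + 1) (hJ : J.card = r + 1)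
    (i j : Fin n) :
    fderiv ℂ (minorFun I J) (fun p : Fin m × Fin n => X p.1 p.2)
      (fun p : Fin m × Fin n => if p.2 = j then X p.1 i else 0) = 0 :=
  fderiv_apply_eq_zero (differentiable_minorFun I J) _ _ (fun t => by
    rw [minorFun_line_col]
    exact minor_updateColumn_zero X hminors hI hJ i j t)

lemma sum_single_row {m n : ℕ} (X : Matrix (Fin m) (Fin n) ℂ) (a b : Fin m) :
    (∑ k : Fin n, X b k • (Pi.single (a, k) (1 : ℂ) : Fin m × Fin n → ℂ))
      = fun p : Fin m × Fin n => if p.1 = a then X b p.2 else 0 := by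
  funext p
  simp only [Finset.sum_apply, Pi.smul_apply, Pi.single_apply, smul_eq_mul]
  by_cases hp : p.1 = a
  · have hsum : ∀ k : Fin n, (X b k * if p = (a, k) then 1 else 0)
        = if k = p.2 then X b p.2 else 0 := by
      intro k
      by_cases h : k = p.2
      · subst h
        have hpp : p = (a, p.2) := by rw [← hp]
        rw [if_pos hpp, if_pos rfl, mul_one]
      · rw [if_neg h, if_neg (fun hc => h (by rw [hc])), mul_zero]
    have h2 : (∑ k, X b k * if p = (a, k) then 1 else 0)
        = ∑ k : Fin n, if k = p.2 then X b p.2 else 0 :=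
      Finset.sum_congr rfl (fun k _ => hsum k)
    rw [h2, Finset.sum_ite_eq' Finset.univ p.2 (fun _ => X b p.2),
      if_pos (Finset.mem_univ _), if_pos hp]
  · rw [if_neg hp]
    apply Finset.sum_eq_zero
    intro k _
    rw [if_neg (fun hc => hp (by rw [hc])), mul_zero]

lemma sum_single_col {m n : ℕ} (X : Matrix (Fin m) (Fin n) ℂ) (a b : Fin n) :
    (∑ k : Fin m, X k b • (Pi.single (k, a) (1 : ℂ) : Fin m × Fin n → ℂ))
      = fun p : Fin m × Fin n => if p.2 = a then X p.1 b else 0 := by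
  funext p
  simp only [Finset.sum_apply, Pi.smul_apply, Pi.single_apply, smul_eq_mul]
  by_cases hp : p.2 = a
  · have hsum : ∀ k : Fin m, (X k b * if p = (k, a) then 1 else 0)
        = if k = p.1 then X p.1 b else 0 := by
      intro k
      by_cases h : k = p.1
      · subst h
        have hpp : p = (p.1, a) := by rw [← hp]
        rw [if_pos hpp, if_pos rfl, mul_one]
      · rw [if_neg h, if_neg (fun hc => h (by rw [hc])), mul_zero]
    have h2 : (∑ k, X k b * if p = (k, a) then 1 else 0)
        = ∑ k : Fin m, if k = p.1 then X p.1 b else 0 :=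
      Finset.sum_congr rfl (fun k _ => hsum k)
    rw [h2, Finset.sum_ite_eq' Finset.univ p.1 (fun _ => X p.1 b),
      if_pos (Finset.mem_univ _), if_pos hp]
  · rw [if_neg hp]
    apply Finset.sum_eq_zero
    intro k _
    rw [if_neg (fun hc => hp (by rw [hc])), mul_zero]

/-- A Lagrange critical point `X` of `d_U` on `𝓛_r^S` (all `(r+1)`-minors vanish, the entries
in `S` vanish, and the gradient condition with multipliers `lam`, `mu` holds) satisfies the
linear relations `(XUᵀ − UXᵀ)_{ij} = 0` whenever rows `i, j` have the same zero pattern in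
`S`, and `(XᵀU − UᵀX)_{ij} = 0` whenever columns `i, j` have the same zero pattern in `S`. -/
theorem stmt_14 {m n : ℕ} (hmn : m ≤ n) (r : ℕ) (hr1 : 1 ≤ r) (hrm : r ≤ m - 1)
    (S : Finset (Fin m × Fin n))
    (U : Matrix (Fin m) (Fin n) ℝ) (X : Matrix (Fin m) (Fin n) ℂ)
    (lam : Finset (Fin m) × Finset (Fin n) → ℂ) (mu : Fin m × Fin n → ℂ)
    (hminors : ∀ (I : Finset (Fin m)) (J : Finset (Fin n)),
      I.card = r + 1 → J.card = r + 1 → minorC X I J = 0)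
    (hzero : ∀ p ∈ S, X p.1 p.2 = 0)
    (hlag : ∀ i j, (U i j : ℂ) - X i j =
      (∑ IJ ∈ Finset.univ.filter
          (fun IJ : Finset (Fin m) × Finset (Fin n) =>
            IJ.1.card = r + 1 ∧ IJ.2.card = r + 1),
        lam IJ *
          fderiv ℂ (minorFun IJ.1 IJ.2) (fun p => X p.1 p.2) (Pi.single (i, j) 1)) +
      ∑ p ∈ S, mu p * (if (i, j) = p then 1 else 0)) :
    (∀ i j : Fin m, (∀ k, (i, k) ∈ S ↔ (j, k) ∈ S) →
      (X * (U.map (Complex.ofReal))ᵀ - (U.map (Complex.ofReal)) * Xᵀ) i j = 0) ∧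
    (∀ i j : Fin n, (∀ k, (k, i) ∈ S ↔ (k, j) ∈ S) →
      (Xᵀ * (U.map (Complex.ofReal)) - (U.map (Complex.ofReal))ᵀ * X) i j = 0) := by
  set F := Finset.univ.filter
      (fun IJ : Finset (Fin m) × Finset (Fin n) =>
        IJ.1.card = r + 1 ∧ IJ.2.card = r + 1) with hF
  constructor
  · intro i j hpat
    have key : ∀ a b : Fin m, (∀ k, (a, k) ∈ S → X b k = 0) →
        ∑ k, X b k * ((U a k : ℂ) - X a k) = 0 := by
      intro a b hS
      have step1 : ∀ k, X b k * ((U a k : ℂ) - X a k)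
          = ∑ IJ ∈ F, lam IJ * (X b k *
              fderiv ℂ (minorFun IJ.1 IJ.2) (fun p => X p.1 p.2) (Pi.single (a, k) 1)) := by
        intro k
        rw [hlag a k, mul_add]
        have hmu : X b k * (∑ p ∈ S, mu p * (if (a, k) = p then 1 else 0)) = 0 := by
          by_cases hk : (a, k) ∈ S
          · rw [hS k hk, zero_mul]
          · rw [Finset.sum_eq_zero (fun p hp => by
              rw [if_neg (fun h => hk (by rw [h]; exact hp)), mul_zero]), mul_zero]
        rw [hmu, add_zero, Finset.mul_sum]
        exact Finset.sum_congr rfl (fun IJ _ => by ring)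
      calc ∑ k, X b k * ((U a k : ℂ) - X a k)
          = ∑ k, ∑ IJ ∈ F, lam IJ * (X b k *
              fderiv ℂ (minorFun IJ.1 IJ.2) (fun p => X p.1 p.2) (Pi.single (a, k) 1)) :=
            Finset.sum_congr rfl (fun k _ => step1 k)
        _ = ∑ IJ ∈ F, lam IJ * ∑ k, X b k *
              fderiv ℂ (minorFun IJ.1 IJ.2) (fun p => X p.1 p.2) (Pi.single (a, k) 1) := by
            rw [Finset.sum_comm]
            exact Finset.sum_congr rfl (fun IJ _ => by rw [Finset.mul_sum])
        _ = 0 := by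
            apply Finset.sum_eq_zero
            intro IJ hIJ
            rw [hF, Finset.mem_filter] at hIJ
            obtain ⟨-, hI, hJ⟩ := hIJ
            have : ∑ k, X b k *
                fderiv ℂ (minorFun IJ.1 IJ.2) (fun p => X p.1 p.2) (Pi.single (a, k) 1)
                = fderiv ℂ (minorFun IJ.1 IJ.2) (fun p => X p.1 p.2)
                    (∑ k, X b k • (Pi.single (a, k) (1 : ℂ) : Fin m × Fin n → ℂ)) := by
              rw [map_sum]
              exact Finset.sum_congr rfl (fun k _ => by rw [ContinuousLinearMap.map_smul]; rfl)
            rw [this, sum_single_row X a b, fderiv_minor_row X hminors hI hJ b a, mul_zero]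
    have h1 := key j i (fun k hk => hzero (i, k) ((hpat k).mpr hk))
    have h2 := key i j (fun k hk => hzero (j, k) ((hpat k).mp hk))
    simp only [Matrix.sub_apply, Matrix.mul_apply, Matrix.transpose_apply, Matrix.map_apply]
    have e1 : ∑ k, X i k * ((U j k : ℂ) - X j k)
        = (∑ k, X i k * (U j k : ℂ)) - ∑ k, X i k * X j k := by
      rw [← Finset.sum_sub_distrib]
      exact Finset.sum_congr rfl (fun k _ => by ring)
    have e2 : ∑ k, X j k * ((U i k : ℂ) - X i k)
        = (∑ k, (U i k : ℂ) * X j k) - ∑ k, X i k * X j k := by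
      rw [← Finset.sum_sub_distrib]
      exact Finset.sum_congr rfl (fun k _ => by ring)
    rw [e1] at h1
    rw [e2] at h2
    have := sub_eq_zero.mpr (sub_eq_zero.mp h1 |>.trans (sub_eq_zero.mp h2).symm)
    convert this using 2
  · intro i j hpat
    have key : ∀ a b : Fin n, (∀ k, (k, a) ∈ S → X k b = 0) →
        ∑ k, X k b * ((U k a : ℂ) - X k a) = 0 := by
      intro a b hS
      have step1 : ∀ k, X k b * ((U k a : ℂ) - X k a)
          = ∑ IJ ∈ F, lam IJ * (X k b *
              fderiv ℂ (minorFun IJ.1 IJ.2) (fun p => X p.1 p.2) (Pi.single (k, a) 1)) := by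
        intro k
        rw [hlag k a, mul_add]
        have hmu : X k b * (∑ p ∈ S, mu p * (if (k, a) = p then 1 else 0)) = 0 := by
          by_cases hk : (k, a) ∈ S
          · rw [hS k hk, zero_mul]
          · rw [Finset.sum_eq_zero (fun p hp => by
              rw [if_neg (fun h => hk (by rw [h]; exact hp)), mul_zero]), mul_zero]
        rw [hmu, add_zero, Finset.mul_sum]
        exact Finset.sum_congr rfl (fun IJ _ => by ring)
      calc ∑ k, X k b * ((U k a : ℂ) - X k a)
          = ∑ k, ∑ IJ ∈ F, lam IJ * (X k b *
              fderiv ℂ (minorFun IJ.1 IJ.2) (fun p => X p.1 p.2) (Pi.single (k, a) 1)) :=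
            Finset.sum_congr rfl (fun k _ => step1 k)
        _ = ∑ IJ ∈ F, lam IJ * ∑ k, X k b *
              fderiv ℂ (minorFun IJ.1 IJ.2) (fun p => X p.1 p.2) (Pi.single (k, a) 1) := by
            rw [Finset.sum_comm]
            exact Finset.sum_congr rfl (fun IJ _ => by rw [Finset.mul_sum])
        _ = 0 := by
            apply Finset.sum_eq_zero
            intro IJ hIJ
            rw [hF, Finset.mem_filter] at hIJ
            obtain ⟨-, hI, hJ⟩ := hIJ
            have : ∑ k, X k b *
                fderiv ℂ (minorFun IJ.1 IJ.2) (fun p => X p.1 p.2) (Pi.single (k, a) 1)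
                = fderiv ℂ (minorFun IJ.1 IJ.2) (fun p => X p.1 p.2)
                    (∑ k, X k b • (Pi.single (k, a) (1 : ℂ) : Fin m × Fin n → ℂ)) := by
              rw [map_sum]
              exact Finset.sum_congr rfl (fun k _ => by rw [ContinuousLinearMap.map_smul]; rfl)
            rw [this, sum_single_col X a b, fderiv_minor_col X hminors hI hJ b a, mul_zero]
    have h1 := key j i (fun k hk => hzero (k, i) ((hpat k).mpr hk))
    have h2 := key i j (fun k hk => hzero (k, j) ((hpat k).mp hk))
    simp only [Matrix.sub_apply, Matrix.mul_apply, Matrix.transpose_apply, Matrix.map_apply]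
    have e1 : ∑ k, X k i * ((U k j : ℂ) - X k j)
        = (∑ k, X k i * (U k j : ℂ)) - ∑ k, X k i * X k j := by
      rw [← Finset.sum_sub_distrib]
      exact Finset.sum_congr rfl (fun k _ => by ring)
    have e2 : ∑ k, X k j * ((U k i : ℂ) - X k i)
        = (∑ k, (U k i : ℂ) * X k j) - ∑ k, X k i * X k j := by
      rw [← Finset.sum_sub_distrib]
      exact Finset.sum_congr rfl (fun k _ => by ring)
    rw [e1] at h1
    rw [e2] at h2
    have := sub_eq_zero.mpr (sub_eq_zero.mp h1 |>.trans (sub_eq_zero.mp h2).symm)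
    convert this using 2
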